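/- For a multidimensional assignment problem with $s$ dimensions and $n \geq 2$ items, the size of the 2-opt neighborhood of any assignment $A$ is $|N_{2\text{-opt}}(A)| = 1 + \binom{n}{2}(2^{s-1} - 1)$. -/

import Mathlib

/-- An assignment of the `s`-dimensional MAP of size `n`: `n` vectors (indexed by their first
coordinate position) whose coordinates are pairwise distinct in every dimension. -/
def MAPAssignment (n s : ℕ) : Type :=
  {A : Fin n → Fin s → Fin n // ∀ j : Fin s, Function.Injective (fun i => A i j)}

/-- The 2-opt neighborhood of an assignment `A`: `A` itself together with all assignments
obtained by choosing two vectors of `A` and, independently for each of the dimensions other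
than the first one, optionally swapping the coordinates of the two chosen vectors in that
dimension, such that both chosen vectors are modified. -/
def twoOptNbhd (n s : ℕ) (A : MAPAssignment n s) : Set (MAPAssignment n s) :=
  {B | B = A ∨
    ∃ p q : Fin n, p ≠ q ∧
      ∃ D : Finset (Fin s),
        (∀ j ∈ D, (j : ℕ) ≠ 0) ∧
        (∀ i : Fin n, i ≠ p → i ≠ q → B.1 i = A.1 i) ∧
        (∀ j ∈ D, B.1 p j = A.1 q j ∧ B.1 q j = A.1 p j) ∧
        (∀ j ∉ D, B.1 p j = A.1 p j ∧ B.1 q j = A.1 q j) ∧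
        B.1 p ≠ A.1 p ∧ B.1 q ≠ A.1 q}

namespace CardTwoOptAux

variable {n s : ℕ}

lemma map_ne (A : MAPAssignment n s) {p q : Fin n} (h : p ≠ q) (j : Fin s) :
    A.1 p j ≠ A.1 q j := fun hE => h (A.2 j hE)

/-- Swap coordinates of vectors `p` and `q` in all dimensions in `D`. -/
def swapA (A : MAPAssignment n s) (p q : Fin n) (D : Finset (Fin s)) : MAPAssignment n s :=
  ⟨fun i j => A.1 (if j ∈ D then Equiv.swap p q i else i) j, by
    intro j a b h
    dsimp only at h
    split at h
    · exact (Equiv.swap p q).injective (A.2 j h)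
    · exact A.2 j h⟩

lemma swapA_apply (A : MAPAssignment n s) (p q : Fin n) (D : Finset (Fin s)) (i : Fin n)
    (j : Fin s) : (swapA A p q D).1 i j = A.1 (if j ∈ D then Equiv.swap p q i else i) j := rfl

lemma swapA_comm (A : MAPAssignment n s) (p q : Fin n) (D : Finset (Fin s)) :
    swapA A p q D = swapA A q p D := by
  apply Subtype.ext; funext i j; rw [swapA_apply, swapA_apply, Equiv.swap_comm]

lemma swapA_apply_p (A : MAPAssignment n s) (p q : Fin n) {D : Finset (Fin s)} {j : Fin s}
    (hj : j ∈ D) : (swapA A p q D).1 p j = A.1 q j := by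
  rw [swapA_apply, if_pos hj, Equiv.swap_apply_left]

lemma swapA_apply_q (A : MAPAssignment n s) (p q : Fin n) {D : Finset (Fin s)} {j : Fin s}
    (hj : j ∈ D) : (swapA A p q D).1 q j = A.1 p j := by
  rw [swapA_apply, if_pos hj, Equiv.swap_apply_right]

lemma swapA_apply_notmem (A : MAPAssignment n s) (p q : Fin n) {D : Finset (Fin s)} {j : Fin s}
    (hj : j ∉ D) (i : Fin n) : (swapA A p q D).1 i j = A.1 i j := by
  rw [swapA_apply, if_neg hj]

lemma swapA_apply_other (A : MAPAssignment n s) {p q i : Fin n} (hip : i ≠ p) (hiq : i ≠ q)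
    (D : Finset (Fin s)) : (swapA A p q D).1 i = A.1 i := by
  funext j
  rw [swapA_apply, Equiv.swap_apply_of_ne_of_ne hip hiq, ite_self]

lemma swapA_ne_p (A : MAPAssignment n s) {p q : Fin n} (hpq : p ≠ q) {D : Finset (Fin s)}
    (hD : D.Nonempty) : (swapA A p q D).1 p ≠ A.1 p := by
  obtain ⟨j, hj⟩ := hD
  intro h
  exact map_ne A hpq j ((congrFun h j).symm.trans (swapA_apply_p A p q hj))

/-- The parameter type: an unordered pair of distinct indices together with a nonempty set of
dimensions avoiding dimension 0. -/
abbrev T (n s : ℕ) : Type :=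
  {P : Finset (Fin n) // P.card = 2} × {D : Finset (Fin s) // D.Nonempty ∧ ∀ j ∈ D, (j : ℕ) ≠ 0}

lemma P_nonempty {P : Finset (Fin n)} (hP : P.card = 2) : P.Nonempty :=
  Finset.card_pos.mp (by omega)

/-- The function realizing a parameter as an assignment. -/
def G (A : MAPAssignment n s) (x : T n s) : MAPAssignment n s :=
  swapA A (x.1.1.min' (P_nonempty x.1.2)) (x.1.1.max' (P_nonempty x.1.2)) x.2.1

lemma pair_repr {P : Finset (Fin n)} (hP : P.card = 2) :
    ({P.min' (P_nonempty hP), P.max' (P_nonempty hP)} : Finset (Fin n)) = P := by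
  have hne : P.min' (P_nonempty hP) ≠ P.max' (P_nonempty hP) :=
    (Finset.min'_lt_max'_of_card P (by omega)).ne
  apply Finset.eq_of_subset_of_card_le
  · intro i hi
    simp only [Finset.mem_insert, Finset.mem_singleton] at hi
    rcases hi with rfl | rfl
    · exact P.min'_mem _
    · exact P.max'_mem _
  · rw [Finset.card_insert_of_notMem (by simpa using hne), Finset.card_singleton, hP]

lemma min'_ne_max' {P : Finset (Fin n)} (hP : P.card = 2) :
    P.min' (P_nonempty hP) ≠ P.max' (P_nonempty hP) :=
  (Finset.min'_lt_max'_of_card P (by omega)).ne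

lemma G_mem (A : MAPAssignment n s) (x : T n s) : G A x ∈ twoOptNbhd n s A := by
  obtain ⟨⟨P, hP⟩, ⟨D, hDne, hD0⟩⟩ := x
  set p := P.min' (P_nonempty hP)
  set q := P.max' (P_nonempty hP)
  have hpq : p ≠ q := min'_ne_max' hP
  have hG : G A ⟨⟨P, hP⟩, ⟨D, hDne, hD0⟩⟩ = swapA A p q D := rfl
  right
  rw [hG]
  refine ⟨p, q, hpq, D, hD0, ?_, ?_, ?_, ?_, ?_⟩
  · exact fun i hip hiq => swapA_apply_other A hip hiq D
  · exact fun j hj => ⟨swapA_apply_p A p q hj, swapA_apply_q A p q hj⟩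
  · exact fun j hj => ⟨swapA_apply_notmem A p q hj p, swapA_apply_notmem A p q hj q⟩
  · exact swapA_ne_p A hpq hDne
  · rw [swapA_comm]; exact swapA_ne_p A hpq.symm hDne

lemma changed_set (A : MAPAssignment n s) (x : T n s) :
    {i : Fin n | (G A x).1 i ≠ A.1 i} = ↑x.1.1 := by
  obtain ⟨⟨P, hP⟩, ⟨D, hDne, hD0⟩⟩ := x
  set p := P.min' (P_nonempty hP) with hp
  set q := P.max' (P_nonempty hP) with hq
  have hpq : p ≠ q := min'_ne_max' hP
  have hPr : ({p, q} : Finset (Fin n)) = P := pair_repr hP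
  have hG : G A ⟨⟨P, hP⟩, ⟨D, hDne, hD0⟩⟩ = swapA A p q D := rfl
  rw [hG]
  ext i
  simp only [Set.mem_setOf_eq, ← hPr, Finset.coe_insert, Finset.coe_singleton,
    Set.mem_insert_iff, Set.mem_singleton_iff]
  constructor
  · intro h
    by_contra hc
    push_neg at hc
    exact h (swapA_apply_other A hc.1 hc.2 D)
  · rintro (rfl | rfl)
    · exact swapA_ne_p A hpq hDne
    · rw [swapA_comm]
      exact swapA_ne_p A hpq.symm hDne

lemma G_injective (A : MAPAssignment n s) : Function.Injective (G A) := by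
  intro x y hxy
  obtain ⟨⟨P, hP⟩, ⟨D, hDne, hD0⟩⟩ := x
  obtain ⟨⟨Q, hQ⟩, ⟨E, hEne, hE0⟩⟩ := y
  have hPQ : P = Q := by
    have h1 := changed_set A ⟨⟨P, hP⟩, ⟨D, hDne, hD0⟩⟩
    have h2 := changed_set A ⟨⟨Q, hQ⟩, ⟨E, hEne, hE0⟩⟩
    rw [hxy] at h1
    exact Finset.coe_injective (h1.symm.trans h2)
  subst hPQ
  have hDE : D = E := by
    set p := P.min' (P_nonempty hP)
    set q := P.max' (P_nonempty hP)
    have hpq : p ≠ q := min'_ne_max' hP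
    ext j
    constructor
    · intro hj
      by_contra hjE
      have h1 : (G A ⟨⟨P, hP⟩, ⟨D, hDne, hD0⟩⟩).1 p j = A.1 q j := swapA_apply_p A p q hj
      have h2 : (G A ⟨⟨P, hQ⟩, ⟨E, hEne, hE0⟩⟩).1 p j = A.1 p j := swapA_apply_notmem A p q hjE p
      rw [hxy] at h1
      exact map_ne A hpq j (h2.symm.trans h1)
    · intro hj
      by_contra hjD
      have h1 : (G A ⟨⟨P, hQ⟩, ⟨E, hEne, hE0⟩⟩).1 p j = A.1 q j := swapA_apply_p A p q hj
      have h2 : (G A ⟨⟨P, hP⟩, ⟨D, hDne, hD0⟩⟩).1 p j = A.1 p j := swapA_apply_notmem A p q hjD p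
      rw [hxy] at h2
      exact map_ne A hpq j (h2.symm.trans h1)
  subst hDE
  rfl

lemma A_not_mem_range (A : MAPAssignment n s) : A ∉ Set.range (G A) := by
  rintro ⟨⟨⟨P, hP⟩, ⟨D, hDne, hD0⟩⟩, h⟩
  exact swapA_ne_p A (min'_ne_max' hP) hDne (congrFun (congrArg Subtype.val h) _)

lemma nbhd_eq (A : MAPAssignment n s) :
    twoOptNbhd n s A = insert A (Set.range (G A)) := by
  ext B
  constructor
  · rintro (rfl | ⟨p, q, hpq, D, hD0, hout, hswap, hkeep, hBp, hBq⟩)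
    · exact Set.mem_insert _ _
    · -- D is nonempty
      have hDne : D.Nonempty := by
      -- from hBp
        rw [Finset.nonempty_iff_ne_empty]
        rintro rfl
        apply hBp
        funext j
        exact (hkeep j (Finset.notMem_empty j)).1
      -- B = swapA A p q D
      have hB : B = swapA A p q D := by
        apply Subtype.ext
        funext i j
        rw [swapA_apply]
        by_cases hip : i = p
        · subst hip
          by_cases hj : j ∈ D
          · rw [if_pos hj, Equiv.swap_apply_left]; exact (hswap j hj).1
          · rw [if_neg hj]; exact (hkeep j hj).1
        · by_cases hiq : i = q
          · subst hiq
            by_cases hj : j ∈ D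
            · rw [if_pos hj, Equiv.swap_apply_right]; exact (hswap j hj).2
            · rw [if_neg hj]; exact (hkeep j hj).2
          · rw [Equiv.swap_apply_of_ne_of_ne hip hiq, ite_self]
            exact congrFun (hout i hip hiq) j
      -- package as G A x
      right
      have hPcard : ({p, q} : Finset (Fin n)).card = 2 := by
        rw [Finset.card_insert_of_notMem (by simpa using hpq), Finset.card_singleton]
      refine ⟨⟨⟨{p, q}, hPcard⟩, ⟨D, hDne, hD0⟩⟩, ?_⟩
      -- G A x = swapA A min max D, and {min, max} = {p, q}
      show swapA A (({p, q} : Finset (Fin n)).min' _) (({p, q} : Finset (Fin n)).max' _) D = B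
      rw [hB]
      have hmem1 := Finset.min'_mem ({p, q} : Finset (Fin n)) (P_nonempty hPcard)
      have hmem2 := Finset.max'_mem ({p, q} : Finset (Fin n)) (P_nonempty hPcard)
      have hne := min'_ne_max' hPcard
      simp only [Finset.mem_insert, Finset.mem_singleton] at hmem1 hmem2
      rcases hmem1 with h1 | h1 <;> rcases hmem2 with h2 | h2 <;> rw [h1, h2]
      · exact absurd (h1.trans h2.symm) hne
      · exact swapA_comm A q p D
      · exact absurd (h1.trans h2.symm) hne
  · rintro (rfl | ⟨x, rfl⟩)
    · exact Or.inl rfl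
    · exact G_mem A x

lemma card_P : Nat.card {P : Finset (Fin n) // P.card = 2} = n.choose 2 := by
  rw [Nat.card_eq_fintype_card, Fintype.card_finset_len, Fintype.card_fin]

lemma card_D : Nat.card {D : Finset (Fin s) // D.Nonempty ∧ ∀ j ∈ D, (j : ℕ) ≠ 0} =
    2 ^ (s - 1) - 1 := by
  rw [Nat.card_eq_fintype_card, Fintype.card_subtype]
  have hS0 : (Finset.univ.filter (fun j : Fin s => (j : ℕ) ≠ 0)).card = s - 1 := by
    rcases s with _ | m
    · simp
    · have : (Finset.univ.filter (fun j : Fin (m + 1) => (j : ℕ) ≠ 0)) =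
          Finset.univ.erase 0 := by
        ext j
        simp only [Finset.mem_filter, Finset.mem_univ, true_and, Finset.mem_erase, and_true,
          ne_eq, Fin.ext_iff, Fin.val_zero]
      rw [this, Finset.card_erase_of_mem (Finset.mem_univ 0), Finset.card_univ, Fintype.card_fin]
  have : (Finset.univ.filter
      (fun D : Finset (Fin s) => D.Nonempty ∧ ∀ j ∈ D, (j : ℕ) ≠ 0)) =
      ((Finset.univ.filter (fun j : Fin s => (j : ℕ) ≠ 0)).powerset).erase ∅ := by
    ext D
    simp only [Finset.mem_filter, Finset.mem_univ, true_and, Finset.mem_erase,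
      Finset.mem_powerset, Finset.nonempty_iff_ne_empty, Finset.subset_iff,
      Finset.mem_filter]
  rw [this, Finset.card_erase_of_mem (Finset.empty_mem_powerset _), Finset.card_powerset, hS0]

end CardTwoOptAux

/-- The size of the 2-opt neighborhood of any assignment of the `s`-dimensional MAP with
`n ≥ 2` items is `1 + C(n,2)(2^(s-1) - 1)`. -/
theorem card_twoOptNbhd (n s : ℕ) (hn : 2 ≤ n) (A : MAPAssignment n s) :
    Nat.card ↥(twoOptNbhd n s A) = 1 + n.choose 2 * (2 ^ (s - 1) - 1) := by
  classical
  open CardTwoOptAux in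
  rw [nbhd_eq A, Nat.card_coe_set_eq,
    Set.ncard_insert_of_notMem (A_not_mem_range A) (Set.finite_range _),
    ← Nat.card_coe_set_eq, Nat.card_range_of_injective (G_injective A),
    Nat.card_prod, card_P, card_D, Nat.add_comm]
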